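/- Let n ≥ k ≥ 2 be positive integers. Then 1 − 2^{C(k,2)−1} is a root of the polynomial Q_{n,k}(t) if and only if n ≥ R(k). -/

import Mathlib

open Finset

/-- The k-th diagonal Ramsey number. -/
noncomputable def diagonalRamsey (k : ℕ) : ℕ :=
  sInf {n : ℕ | 0 < n ∧ ∀ G : SimpleGraph (Fin n),
    (∃ s : Finset (Fin n), G.IsNClique k s) ∨ (∃ s : Finset (Fin n), Gᶜ.IsNClique k s)}

/-- The set of `k`-element subsets of `[n]`. -/
def ksubsets (n k : ℕ) : Finset (Finset (Fin n)) :=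
  Finset.powersetCard k (Finset.univ : Finset (Fin n))

/-- The set `B` of assignments `h` associating to each `k`-element subset `S` of `[n]`
a graph on the vertex set `S` (given by its edge set, a set of `2`-element subsets of `S`)
such that every `|E(h_S)|` is even and every `2`-element subset `e` of `[n]` lies in
`E(h_S)` for an even number of `S`. -/
def RamseyB (n k : ℕ) : Finset (Finset (Fin n) → Finset (Finset (Fin n))) :=
  Finset.univ.filter fun h =>
    (∀ S ∈ ksubsets n k, h S ⊆ Finset.powersetCard 2 S ∧ Even (h S).card) ∧
    (∀ S, S ∉ ksubsets n k → h S = ∅) ∧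
    (∀ e ∈ Finset.powersetCard 2 (Finset.univ : Finset (Fin n)),
      Even ((ksubsets n k).filter fun S => e ∈ h S).card)

/-- The polynomial `Q_{n,k}(t) = Σ_{h ∈ B} t^{|Empty(h)|}`. -/
noncomputable def Qnk (n k : ℕ) : Polynomial ℤ :=
  ∑ h ∈ RamseyB n k,
    Polynomial.X ^ ((ksubsets n k).filter fun S => h S = ∅).card

lemma prodchi {α : Type*} [DecidableEq α] (T g : Finset α) :
    ∏ i ∈ g, (if i ∈ T then (-1:ℤ) else 1) = (-1:ℤ)^((g ∩ T).card) := by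
  rw [Finset.prod_ite, Finset.prod_const, Finset.prod_const, one_pow, mul_one,
    Finset.filter_mem_eq_inter]

lemma orth1 {α : Type*} [DecidableEq α] (P T : Finset α) :
    ∑ g ∈ P.powerset, (-1:ℤ)^((g ∩ T).card) = if P ∩ T = ∅ then 2^P.card else 0 := by
  have h := Finset.prod_add (fun i => if i ∈ T then (-1:ℤ) else 1) (fun _ => 1) P
  simp only [Finset.prod_const_one, mul_one, prodchi] at h
  rw [← h]
  have : ∀ i ∈ P, ((if i ∈ T then (-1:ℤ) else 1) + 1) = if i ∈ T then 0 else 2 := by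
    intro i _; split <;> norm_num
  rw [Finset.prod_congr rfl this, Finset.prod_ite, Finset.prod_const, Finset.prod_const,
    Finset.filter_mem_eq_inter]
  by_cases hPT : P ∩ T = ∅
  · simp only [hPT, if_pos rfl, Finset.card_empty, pow_zero, one_mul]
    congr 2
    rw [Finset.filter_eq_self]
    intro x hx hxT
    exact Finset.notMem_empty x (hPT ▸ Finset.mem_inter.mpr ⟨hx, hxT⟩)
  · rw [if_neg hPT, zero_pow, zero_mul]
    simpa [Finset.card_eq_zero] using hPT

lemma orth2 {α : Type*} [DecidableEq α] (P T : Finset α) :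
    ∑ g ∈ P.powerset, (-1:ℤ)^(g.card) * (-1)^((g ∩ T).card)
      = if P ⊆ T then 2^P.card else 0 := by
  have h := Finset.prod_add (fun i => if i ∈ T then (1:ℤ) else -1) (fun _ => 1) P
  simp only [Finset.prod_const_one, mul_one] at h
  have key : ∀ g : Finset α, ∏ i ∈ g, (if i ∈ T then (1:ℤ) else -1)
      = (-1:ℤ)^(g.card) * (-1)^((g ∩ T).card) := by
    intro g
    rw [← prodchi T g, ← Finset.prod_const (-1:ℤ) (s := g), ← Finset.prod_mul_distrib]
    apply Finset.prod_congr rfl; intro i _; split <;> norm_num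
  simp only [key] at h
  rw [← h]
  have : ∀ i ∈ P, ((if i ∈ T then (1:ℤ) else -1) + 1) = if i ∈ T then 2 else 0 := by
    intro i _; split <;> norm_num
  rw [Finset.prod_congr rfl this, Finset.prod_ite, Finset.prod_const, Finset.prod_const,
    Finset.filter_mem_eq_inter]
  by_cases hPT : P ⊆ T
  · rw [if_pos hPT]
    have h1 : P ∩ T = P := Finset.inter_eq_left.mpr hPT
    have h2 : P.filter (fun i => ¬ i ∈ T) = ∅ := by
      rw [Finset.filter_eq_empty_iff]; intro i hi; simp [hPT hi]
    rw [h1, h2]; simp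
  · rw [if_neg hPT]
    have : (P.filter (fun i => ¬ i ∈ T)).Nonempty := by
      rw [Finset.filter_nonempty_iff]
      obtain ⟨x, hx, hx2⟩ := Finset.not_subset.mp hPT
      exact ⟨x, hx, hx2⟩
    rw [zero_pow (by simpa [Finset.card_eq_zero, ← Finset.nonempty_iff_ne_empty, Finset.filter_nonempty_iff] using this), mul_zero]

lemma evensum {α : Type*} [DecidableEq α] (P T : Finset α) :
    2 * ∑ g ∈ P.powerset.filter (fun g => Even g.card), (-1:ℤ)^((g ∩ T).card)
      = (if P ∩ T = ∅ then 2^P.card else 0) + (if P ⊆ T then 2^P.card else 0) := by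
  rw [← orth1 P T, ← orth2 P T, ← Finset.sum_add_distrib]
  rw [← Finset.sum_filter_add_sum_filter_not P.powerset (fun g => Even g.card)
    (fun g => (-1:ℤ)^((g ∩ T).card) + (-1:ℤ)^(g.card) * (-1)^((g ∩ T).card))]
  have h1 : ∑ g ∈ P.powerset.filter (fun g => Even g.card),
      ((-1:ℤ)^((g ∩ T).card) + (-1:ℤ)^(g.card) * (-1)^((g ∩ T).card))
      = 2 * ∑ g ∈ P.powerset.filter (fun g => Even g.card), (-1:ℤ)^((g ∩ T).card) := by
    rw [Finset.mul_sum]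
    apply Finset.sum_congr rfl
    intro g hg
    rw [Finset.mem_filter] at hg
    rw [hg.2.neg_one_pow]
    ring
  have h2 : ∑ g ∈ P.powerset.filter (fun g => ¬ Even g.card),
      ((-1:ℤ)^((g ∩ T).card) + (-1:ℤ)^(g.card) * (-1)^((g ∩ T).card)) = 0 := by
    apply Finset.sum_eq_zero
    intro g hg
    rw [Finset.mem_filter] at hg
    rw [(Nat.not_even_iff_odd.mp hg.2).neg_one_pow]
    ring
  rw [h1, h2, add_zero]

lemma my_inner_sum {α : Type*} [DecidableEq α] (P T : Finset α) (hP : P.Nonempty) :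
    ∑ g ∈ P.powerset.filter (fun g => Even g.card),
        (-1:ℤ)^((g ∩ T).card) * (if g = ∅ then (1 - 2^(P.card - 1) : ℤ) else 1)
      = 2^(P.card - 1) * (if P ∩ T = ∅ ∨ P ⊆ T then 0 else -1) := by
  have hsplit : ∀ g : Finset α,
      (-1:ℤ)^((g ∩ T).card) * (if g = ∅ then (1 - 2^(P.card - 1) : ℤ) else 1)
      = (-1:ℤ)^((g ∩ T).card) + (if g = ∅ then -(2:ℤ)^(P.card - 1) else 0) := by
    intro g
    by_cases h : g = ∅ <;> simp [h] <;> ring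
  simp only [hsplit]
  rw [Finset.sum_add_distrib]
  have hmem : ∅ ∈ P.powerset.filter (fun g => Even (g : Finset α).card) := by
    simp
  rw [Finset.sum_ite_eq' (P.powerset.filter (fun g => Even (g : Finset α).card)) ∅
    (fun _ => -(2:ℤ)^(P.card - 1)), if_pos hmem]
  have h2 : (2:ℤ) * (∑ g ∈ P.powerset.filter (fun g => Even g.card), (-1:ℤ)^((g ∩ T).card)
      + -(2:ℤ)^(P.card - 1)) = 2 * (2^(P.card - 1) * (if P ∩ T = ∅ ∨ P ⊆ T then 0 else -1)) := by
    rw [mul_add, evensum P T]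
    have hcard : 0 < P.card := Finset.card_pos.mpr hP
    have hc : (2:ℤ) * 2^(P.card - 1) = 2^P.card := by
      rw [← pow_succ']
      congr 1
      omega
    by_cases h1 : P ∩ T = ∅
    · have h2 : ¬ P ⊆ T := by
        intro hsub
        have := Finset.inter_eq_left.mpr hsub
        rw [h1] at this
        exact hP.ne_empty this.symm
      simp [h1, h2, hc]
      try ring
    · by_cases h2 : P ⊆ T
      · simp [h1, h2, hc]
        try ring
      · simp [h1, h2, hc]
        try ring
  exact mul_left_cancel₀ (by norm_num) h2

lemma parity_sum {β ι : Type*} [DecidableEq β] (E : Finset β) (K : Finset ι)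
    (h : ι → Finset β) :
    ∑ σ ∈ E.powerset, ∏ S ∈ K, (-1:ℤ)^((h S ∩ σ).card)
      = if (∀ e ∈ E, Even ((K.filter fun S => e ∈ h S).card)) then 2^E.card else 0 := by
  have key : ∀ σ : Finset β, ∏ S ∈ K, (-1:ℤ)^((h S ∩ σ).card)
      = ∏ e ∈ σ, (-1:ℤ)^((K.filter fun S => e ∈ h S).card) := by
    intro σ
    rw [Finset.prod_pow_eq_pow_sum, Finset.prod_pow_eq_pow_sum]
    congr 1
    have : ∀ S ∈ K, (h S ∩ σ).card = ∑ e ∈ σ, if e ∈ h S then 1 else 0 := by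
      intro S _
      rw [Finset.inter_comm, ← Finset.filter_mem_eq_inter, Finset.card_filter]
    rw [Finset.sum_congr rfl this, Finset.sum_comm]
    apply Finset.sum_congr rfl
    intro e _
    rw [Finset.card_filter]
  simp only [key]
  have h2 := Finset.prod_add (fun e => (-1:ℤ)^((K.filter fun S => e ∈ h S).card))
    (fun _ => (1:ℤ)) E
  simp only [Finset.prod_const_one, mul_one] at h2
  rw [← h2]
  have h3 : ∀ e ∈ E, ((-1:ℤ)^((K.filter fun S => e ∈ h S).card) + 1)
      = if Even ((K.filter fun S => e ∈ h S).card) then 2 else 0 := by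
    intro e _
    by_cases he : Even ((K.filter fun S => e ∈ h S).card)
    · rw [if_pos he, he.neg_one_pow]; norm_num
    · rw [if_neg he, (Nat.not_even_iff_odd.mp he).neg_one_pow]; norm_num
  rw [Finset.prod_congr rfl h3, Finset.prod_ite, Finset.prod_const, Finset.prod_const]
  by_cases hall : ∀ e ∈ E, Even ((K.filter fun S => e ∈ h S).card)
  · rw [if_pos hall]
    have : E.filter (fun e => ¬ Even ((K.filter fun S => e ∈ h S).card)) = ∅ := by
      rw [Finset.filter_eq_empty_iff]; intro e he; simpa using hall e he
    rw [this]
    have : E.filter (fun e => Even ((K.filter fun S => e ∈ h S).card)) = E :=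
      Finset.filter_eq_self.mpr hall
    rw [this]; simp
  · rw [if_neg hall]
    push_neg at hall
    obtain ⟨e, he, hne⟩ := hall
    have : (E.filter (fun e => ¬ Even ((K.filter fun S => e ∈ h S).card))).Nonempty :=
      ⟨e, Finset.mem_filter.mpr ⟨he, hne⟩⟩
    rw [zero_pow (by simpa [Finset.card_eq_zero, ← Finset.nonempty_iff_ne_empty, Finset.filter_nonempty_iff] using this),
      mul_zero]

/-- even-cardinality subgraphs on `S` -/
def myEvens (n : ℕ) (S : Finset (Fin n)) : Finset (Finset (Finset (Fin n))) :=
  ((Finset.powersetCard 2 S).powerset).filter (fun g => Even g.card)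

def myTfun (n k : ℕ) (S : Finset (Fin n)) : Finset (Finset (Finset (Fin n))) :=
  if S ∈ ksubsets n k then myEvens n S else {∅}

lemma RamseyB_eq (n k : ℕ) :
    RamseyB n k = (Fintype.piFinset (myTfun n k)).filter
      (fun h => ∀ e ∈ Finset.powersetCard 2 (Finset.univ : Finset (Fin n)),
        Even ((ksubsets n k).filter fun S => e ∈ h S).card) := by
  ext h
  simp only [RamseyB, Finset.mem_filter, Finset.mem_univ, true_and,
    Fintype.mem_piFinset, myTfun, myEvens]
  constructor
  · rintro ⟨h1, h2, h3⟩
    refine ⟨fun S => ?_, h3⟩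
    by_cases hS : S ∈ ksubsets n k
    · rw [if_pos hS]
      simp only [Finset.mem_filter, Finset.mem_powerset]
      exact h1 S hS
    · rw [if_neg hS]
      simp [h2 S hS]
  · rintro ⟨h1, h3⟩
    refine ⟨fun S hS => ?_, fun S hS => ?_, h3⟩
    · have := h1 S
      rw [if_pos hS] at this
      simpa only [Finset.mem_filter, Finset.mem_powerset] using this
    · have := h1 S
      rw [if_neg hS] at this
      simpa using this

lemma factor_sum (n k : ℕ) (f : Finset (Fin n) → Finset (Finset (Fin n)) → ℤ) :
    ∑ h ∈ Fintype.piFinset (myTfun n k), ∏ S ∈ ksubsets n k, f S (h S)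
      = ∏ S ∈ ksubsets n k, ∑ g ∈ myEvens n S, f S g := by
  have key := Finset.prod_univ_sum (myTfun n k)
    (fun S g => if S ∈ ksubsets n k then f S g else 1)
  have lhs : (∏ S : Finset (Fin n), ∑ g ∈ myTfun n k S,
      if S ∈ ksubsets n k then f S g else 1)
      = ∏ S ∈ ksubsets n k, ∑ g ∈ myEvens n S, f S g := by
    have step : ∀ S : Finset (Fin n), (∑ g ∈ myTfun n k S,
        if S ∈ ksubsets n k then f S g else 1)
        = if S ∈ ksubsets n k then (∑ g ∈ myEvens n S, f S g) else 1 := by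
      intro S
      by_cases hS : S ∈ ksubsets n k
      · simp only [if_pos hS, myTfun]
      · simp only [if_neg hS, myTfun, Finset.sum_singleton]
    rw [Finset.prod_congr rfl (fun S _ => step S),
      Finset.prod_ite_mem Finset.univ (ksubsets n k)
        (fun S => ∑ g ∈ myEvens n S, f S g), Finset.univ_inter]
  have rhs : ∀ h ∈ Fintype.piFinset (myTfun n k),
      (∏ S : Finset (Fin n), if S ∈ ksubsets n k then f S (h S) else 1)
      = ∏ S ∈ ksubsets n k, f S (h S) := by
    intro h _
    rw [Finset.prod_ite_mem Finset.univ (ksubsets n k) (fun S => f S (h S)),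
      Finset.univ_inter]
  rw [← lhs, key]
  exact Finset.sum_congr rfl (fun h hh => (rhs h hh).symm)

lemma main_eval (n k : ℕ) (hk : 2 ≤ k) :
    2^((Finset.powersetCard 2 (Finset.univ : Finset (Fin n))).card)
        * (Qnk n k).eval (1 - 2^(k.choose 2 - 1) : ℤ)
      = 2^((k.choose 2 - 1) * (ksubsets n k).card) * (-1)^((ksubsets n k).card)
        * (((Finset.powersetCard 2 (Finset.univ : Finset (Fin n))).powerset).filter
            (fun σ => ∀ S ∈ ksubsets n k,
              ¬(Finset.powersetCard 2 S ∩ σ = ∅ ∨ Finset.powersetCard 2 S ⊆ σ))).card := by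
  set E := Finset.powersetCard 2 (Finset.univ : Finset (Fin n)) with hE
  set K := ksubsets n k with hK
  set m := k.choose 2 with hm
  set t₀ : ℤ := 1 - 2^(m - 1) with ht₀
  -- step 1+2 : eval as sum of products
  have step1 : (Qnk n k).eval t₀ = ∑ h ∈ RamseyB n k, ∏ S ∈ K,
      (if h S = ∅ then t₀ else 1) := by
    rw [Qnk, Polynomial.eval_finset_sum]
    apply Finset.sum_congr rfl
    intro h _
    rw [Polynomial.eval_pow, Polynomial.eval_X, Finset.prod_ite, Finset.prod_const,
      Finset.prod_const, one_pow, mul_one]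
  -- step 3+4 : unfilter with character sum
  have step3 : 2^E.card * (Qnk n k).eval t₀
      = ∑ h ∈ Fintype.piFinset (myTfun n k),
          ∑ σ ∈ E.powerset, ∏ S ∈ K,
            ((-1:ℤ)^((h S ∩ σ).card) * (if h S = ∅ then t₀ else 1)) := by
    rw [step1, RamseyB_eq, Finset.sum_filter, Finset.mul_sum]
    apply Finset.sum_congr rfl
    intro h _
    have swap : (2:ℤ)^E.card * (if (∀ e ∈ E, Even ((K.filter fun S => e ∈ h S).card))
        then ∏ S ∈ K, (if h S = ∅ then t₀ else 1) else 0)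
        = (if (∀ e ∈ E, Even ((K.filter fun S => e ∈ h S).card)) then (2:ℤ)^E.card else 0)
          * ∏ S ∈ K, (if h S = ∅ then t₀ else 1) := by
      by_cases hp : ∀ e ∈ E, Even ((K.filter fun S => e ∈ h S).card)
      · rw [if_pos hp, if_pos hp]
      · rw [if_neg hp, if_neg hp, mul_zero, zero_mul]
    rw [hE, hK] at swap ⊢
    rw [swap]
    have hps := parity_sum (Finset.powersetCard 2 (Finset.univ : Finset (Fin n)))
      (ksubsets n k) (fun S => h S)
    by_cases hp : ∀ e ∈ Finset.powersetCard 2 (Finset.univ : Finset (Fin n)),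
        Even (((ksubsets n k).filter fun S => e ∈ h S).card)
    · rw [if_pos hp] at hps ⊢
      rw [← hps, Finset.sum_mul]
      apply Finset.sum_congr rfl
      intro σ _
      rw [Finset.prod_mul_distrib]
    · rw [if_neg hp] at hps ⊢
      rw [← hps, Finset.sum_mul]
      apply Finset.sum_congr rfl
      intro σ _
      rw [Finset.prod_mul_distrib]
  rw [step3, Finset.sum_comm]
  -- step 7 : factor
  have step7 : ∀ σ ∈ E.powerset,
      (∑ h ∈ Fintype.piFinset (myTfun n k), ∏ S ∈ K,
        ((-1:ℤ)^((h S ∩ σ).card) * (if h S = ∅ then t₀ else 1)))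
      = ∏ S ∈ K, ∑ g ∈ myEvens n S,
          ((-1:ℤ)^((g ∩ σ).card) * (if g = ∅ then t₀ else 1)) := by
    intro σ _
    exact factor_sum n k (fun S g => (-1:ℤ)^((g ∩ σ).card) * (if g = ∅ then t₀ else 1))
  rw [Finset.sum_congr rfl step7]
  -- step 8 : inner sums
  have hcardP : ∀ S ∈ K, (Finset.powersetCard 2 S).card = m := by
    intro S hS
    rw [Finset.card_powersetCard]
    rw [hK, ksubsets, Finset.mem_powersetCard] at hS
    rw [hS.2]
  have step8 : ∀ σ ∈ E.powerset, ∀ S ∈ K,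
      (∑ g ∈ myEvens n S, ((-1:ℤ)^((g ∩ σ).card) * (if g = ∅ then t₀ else 1)))
      = 2^(m-1) * (if Finset.powersetCard 2 S ∩ σ = ∅ ∨ Finset.powersetCard 2 S ⊆ σ
          then 0 else -1) := by
    intro σ _ S hS
    have hP : (Finset.powersetCard 2 S).Nonempty := by
      rw [← Finset.card_pos, hcardP S hS, hm]
      exact Nat.choose_pos hk
    have := my_inner_sum (Finset.powersetCard 2 S) σ hP
    rw [hcardP S hS] at this
    rw [myEvens, ← this]
  have step8' : ∀ σ ∈ E.powerset,
      (∏ S ∈ K, ∑ g ∈ myEvens n S, ((-1:ℤ)^((g ∩ σ).card) * (if g = ∅ then t₀ else 1)))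
      = 2^((m-1) * K.card) *
        ∏ S ∈ K, (if Finset.powersetCard 2 S ∩ σ = ∅ ∨ Finset.powersetCard 2 S ⊆ σ
          then (0:ℤ) else -1) := by
    intro σ hσ
    rw [Finset.prod_congr rfl (step8 σ hσ), Finset.prod_mul_distrib, Finset.prod_const,
      ← pow_mul]
  rw [Finset.sum_congr rfl step8']
  -- step 9 : the product of indicators
  have step9 : ∀ σ : Finset (Finset (Fin n)),
      (∏ S ∈ K, (if Finset.powersetCard 2 S ∩ σ = ∅ ∨ Finset.powersetCard 2 S ⊆ σ
          then (0:ℤ) else -1))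
      = if (∀ S ∈ K, ¬(Finset.powersetCard 2 S ∩ σ = ∅ ∨ Finset.powersetCard 2 S ⊆ σ))
          then (-1:ℤ)^K.card else 0 := by
    intro σ
    by_cases hgood : ∀ S ∈ K, ¬(Finset.powersetCard 2 S ∩ σ = ∅ ∨ Finset.powersetCard 2 S ⊆ σ)
    · rw [if_pos hgood]
      rw [Finset.prod_congr rfl (fun S hS => if_neg (hgood S hS)), Finset.prod_const]
    · rw [if_neg hgood]
      push_neg at hgood
      obtain ⟨S, hS, hSmono⟩ := hgood
      apply Finset.prod_eq_zero hS
      rw [if_pos hSmono]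
  rw [Finset.sum_congr rfl (fun σ _ => by rw [step9 σ])]
  -- step 10 : collect
  rw [← Finset.mul_sum, Finset.sum_ite, Finset.sum_const, Finset.sum_const_zero, add_zero,
    nsmul_eq_mul, mul_comm ((((E.powerset).filter _).card : ℤ)) ((-1:ℤ)^K.card), ← mul_assoc]

-- transfer of cliques along injective maps
lemma clique_comap {α β : Type*} [DecidableEq β] (G : SimpleGraph β) (f : α ↪ β)
    {k : ℕ} {s : Finset α} (hs : (G.comap f).IsNClique k s) :
    G.IsNClique k (s.map f) := by
  constructor
  · intro x hx y hy hxy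
    simp only [Finset.coe_map, Set.mem_image, Finset.mem_coe] at hx hy
    obtain ⟨a, ha, rfl⟩ := hx
    obtain ⟨b, hb, rfl⟩ := hy
    exact hs.1 ha hb (fun hab => hxy (by rw [hab]))
  · rw [Finset.card_map]; exact hs.2

lemma clique_comap_compl {α β : Type*} [DecidableEq β] (G : SimpleGraph β) (f : α ↪ β)
    {k : ℕ} {s : Finset α} (hs : (G.comap f)ᶜ.IsNClique k s) :
    Gᶜ.IsNClique k (s.map f) := by
  have hle : (G.comap f)ᶜ ≤ Gᶜ.comap f := by
    intro a b hab
    rw [SimpleGraph.compl_adj] at hab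
    exact ⟨fun h => hab.1 (f.injective h), hab.2⟩
  exact clique_comap Gᶜ f (hs.mono hle)

/-- the 2-coloring Ramsey property -/
def ramseyProp (s t n : ℕ) : Prop :=
  ∀ G : SimpleGraph (Fin n),
    (∃ A : Finset (Fin n), G.IsNClique s A) ∨ (∃ A : Finset (Fin n), Gᶜ.IsNClique t A)

lemma ramseyProp_mono {s t n N : ℕ} (hn : n ≤ N) (H : ramseyProp s t n) :
    ramseyProp s t N := by
  intro G
  have f : Fin n ↪ Fin N := ⟨Fin.castLE hn, Fin.castLE_injective hn⟩
  rcases H (G.comap f) with ⟨A, hA⟩ | ⟨A, hA⟩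
  · exact Or.inl ⟨A.map f, clique_comap G f hA⟩
  · exact Or.inr ⟨A.map f, clique_comap_compl G f hA⟩

lemma ramsey_exists : ∀ p s t : ℕ, s + t ≤ p → ∃ n : ℕ, 0 < n ∧ ramseyProp s t n := by
  intro p
  induction p with
  | zero =>
    intro s t hst
    refine ⟨1, one_pos, fun G => Or.inl ⟨∅, ?_⟩⟩
    rw [SimpleGraph.isNClique_empty]
    omega
  | succ p ih =>
    intro s t hst
    match s, t with
    | 0, t =>
      exact ⟨1, one_pos, fun G => Or.inl ⟨∅, by rw [SimpleGraph.isNClique_empty]⟩⟩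
    | s, 0 =>
      exact ⟨1, one_pos, fun G => Or.inr ⟨∅, by rw [SimpleGraph.isNClique_empty]⟩⟩
    | s+1, t+1 =>
      obtain ⟨n₁, hn₁, H₁⟩ := ih s (t+1) (by omega)
      obtain ⟨n₂, hn₂, H₂⟩ := ih (s+1) t (by omega)
      refine ⟨n₁ + n₂, by omega, ?_⟩
      intro G
      classical
      set v : Fin (n₁ + n₂) := ⟨0, by omega⟩ with hv
      have hsplit : (G.neighborFinset v).card + (Gᶜ.neighborFinset v).card
          = n₁ + n₂ - 1 := by
        have hdisj : Disjoint (G.neighborFinset v) (Gᶜ.neighborFinset v) := by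
          rw [Finset.disjoint_left]
          intro w hw hw'
          rw [SimpleGraph.mem_neighborFinset] at hw hw'
          exact (hw'.2 hw).elim
        have hunion : G.neighborFinset v ∪ Gᶜ.neighborFinset v = Finset.univ.erase v := by
          ext w
          simp only [Finset.mem_union, SimpleGraph.mem_neighborFinset,
            Finset.mem_erase, Finset.mem_univ, and_true, SimpleGraph.compl_adj]
          constructor
          · rintro (h | ⟨h1, h2⟩)
            · exact (G.ne_of_adj h).symm
            · exact fun hw => h1 hw.symm
          · intro hw
            by_cases hadj : G.Adj v w
            · exact Or.inl hadj
            · exact Or.inr ⟨fun h => hw h.symm, hadj⟩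
        have := Finset.card_union_of_disjoint hdisj
        rw [hunion, Finset.card_erase_of_mem (Finset.mem_univ v), Finset.card_univ,
          Fintype.card_fin] at this
        omega
      by_cases hcase : n₁ ≤ (G.neighborFinset v).card
      · obtain ⟨T, hT, hTcard⟩ := Finset.exists_subset_card_eq hcase
        let f : Fin n₁ ↪ Fin (n₁ + n₂) := (T.orderEmbOfFin hTcard).toEmbedding
        have hf : ∀ i, f i ∈ T := fun i => T.orderEmbOfFin_mem hTcard i
        rcases H₁ (G.comap f) with ⟨A, hA⟩ | ⟨A, hA⟩
        · left
          refine ⟨insert v (A.map f), (clique_comap G f hA).insert ?_⟩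
          intro b hb
          rw [Finset.mem_map] at hb
          obtain ⟨a, _, rfl⟩ := hb
          have : f a ∈ G.neighborFinset v := hT (hf a)
          rwa [SimpleGraph.mem_neighborFinset] at this
        · exact Or.inr ⟨A.map f, clique_comap_compl G f hA⟩
      · have hcase2 : n₂ ≤ (Gᶜ.neighborFinset v).card := by omega
        obtain ⟨T, hT, hTcard⟩ := Finset.exists_subset_card_eq hcase2
        let f : Fin n₂ ↪ Fin (n₁ + n₂) := (T.orderEmbOfFin hTcard).toEmbedding
        have hf : ∀ i, f i ∈ T := fun i => T.orderEmbOfFin_mem hTcard i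
        rcases H₂ (G.comap f) with ⟨A, hA⟩ | ⟨A, hA⟩
        · exact Or.inl ⟨A.map f, clique_comap G f hA⟩
        · right
          refine ⟨insert v (A.map f), (clique_comap_compl G f hA).insert ?_⟩
          intro b hb
          rw [Finset.mem_map] at hb
          obtain ⟨a, _, rfl⟩ := hb
          have : f a ∈ Gᶜ.neighborFinset v := hT (hf a)
          rwa [SimpleGraph.mem_neighborFinset] at this

lemma pair_mem_powersetCard_two {α : Type*} [DecidableEq α] {a b : α} {S : Finset α}
    (ha : a ∈ S) (hb : b ∈ S) (hab : a ≠ b) :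
    ({a, b} : Finset α) ∈ Finset.powersetCard 2 S := by
  rw [Finset.mem_powersetCard]
  constructor
  · intro x hx
    rcases Finset.mem_insert.mp hx with rfl | hx
    · exact ha
    · rw [Finset.mem_singleton] at hx
      exact hx ▸ hb
  · exact Finset.card_pair hab

lemma bridge (n k : ℕ) :
    (∀ σ ∈ (Finset.powersetCard 2 (Finset.univ : Finset (Fin n))).powerset,
      ∃ S ∈ ksubsets n k,
        (Finset.powersetCard 2 S ∩ σ = ∅ ∨ Finset.powersetCard 2 S ⊆ σ))
    ↔ ∀ G : SimpleGraph (Fin n),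
        (∃ s : Finset (Fin n), G.IsNClique k s) ∨
        (∃ s : Finset (Fin n), Gᶜ.IsNClique k s) := by
  constructor
  · intro H G
    classical
    set σG := (Finset.powersetCard 2 (Finset.univ : Finset (Fin n))).filter
      (fun e => ∃ a ∈ e, ∃ b ∈ e, G.Adj a b) with hσG
    obtain ⟨S, hS, hcase⟩ := H σG (Finset.mem_powerset.mpr (Finset.filter_subset _ _))
    have hScard : S.card = k := (Finset.mem_powersetCard.mp hS).2
    rcases hcase with hdisj | hsub
    · right
      refine ⟨S, ⟨?_, hScard⟩⟩
      intro a ha b hb hab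
      rw [SimpleGraph.compl_adj]
      refine ⟨hab, fun hadj => ?_⟩
      have hmem : ({a, b} : Finset (Fin n)) ∈ Finset.powersetCard 2 S ∩ σG := by
        rw [Finset.mem_inter]
        refine ⟨pair_mem_powersetCard_two ha hb hab, ?_⟩
        rw [hσG, Finset.mem_filter]
        exact ⟨pair_mem_powersetCard_two (Finset.mem_univ a) (Finset.mem_univ b) hab,
          a, Finset.mem_insert_self a _, b, by simp, hadj⟩
      rw [hdisj] at hmem
      exact Finset.notMem_empty _ hmem
    · left
      refine ⟨S, ⟨?_, hScard⟩⟩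
      intro a ha b hb hab
      have hmem : ({a, b} : Finset (Fin n)) ∈ σG := hsub (pair_mem_powersetCard_two ha hb hab)
      rw [hσG, Finset.mem_filter] at hmem
      obtain ⟨-, x, hx, y, hy, hxy⟩ := hmem
      have hx' : x = a ∨ x = b := by simpa using hx
      have hy' : y = a ∨ y = b := by simpa using hy
      rcases hx' with rfl | rfl <;> rcases hy' with rfl | rfl
      · exact (hxy.ne rfl).elim
      · exact hxy
      · exact hxy.symm
      · exact (hxy.ne rfl).elim
  · intro H σ hσ
    classical
    set G := SimpleGraph.fromRel (fun a b => ({a, b} : Finset (Fin n)) ∈ σ) with hG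
    rcases H G with ⟨s, hs⟩ | ⟨s, hs⟩
    · refine ⟨s, Finset.mem_powersetCard.mpr ⟨Finset.subset_univ s, hs.2⟩, Or.inr ?_⟩
      intro e he
      rw [Finset.mem_powersetCard] at he
      obtain ⟨a, b, hab, rfl⟩ := Finset.card_eq_two.mp he.2
      have ha : a ∈ s := he.1 (Finset.mem_insert_self a _)
      have hb : b ∈ s := he.1 (by simp)
      have hadj : G.Adj a b := hs.1 ha hb hab
      rw [hG, SimpleGraph.fromRel_adj] at hadj
      rcases hadj.2 with h | h
      · exact h
      · rwa [Finset.pair_comm]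
    · refine ⟨s, Finset.mem_powersetCard.mpr ⟨Finset.subset_univ s, hs.2⟩, Or.inl ?_⟩
      rw [Finset.eq_empty_iff_forall_notMem]
      intro e he
      rw [Finset.mem_inter, Finset.mem_powersetCard] at he
      obtain ⟨⟨he1, he2⟩, heσ⟩ := he
      obtain ⟨a, b, hab, rfl⟩ := Finset.card_eq_two.mp he2
      have ha : a ∈ s := he1 (Finset.mem_insert_self a _)
      have hb : b ∈ s := he1 (by simp)
      have hadj : Gᶜ.Adj a b := hs.1 ha hb hab
      rw [SimpleGraph.compl_adj, hG, SimpleGraph.fromRel_adj] at hadj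
      exact hadj.2 ⟨hab, Or.inl heσ⟩

theorem stmt_10 (n k : ℕ) (hk : 2 ≤ k) (hkn : k ≤ n) :
    (Qnk n k).IsRoot (1 - 2 ^ (k.choose 2 - 1)) ↔ diagonalRamsey k ≤ n := by
  classical
  have hmain := main_eval n k hk
  rw [Polynomial.IsRoot.def]
  set C := (((Finset.powersetCard 2 (Finset.univ : Finset (Fin n))).powerset).filter
      (fun σ => ∀ S ∈ ksubsets n k,
        ¬(Finset.powersetCard 2 S ∩ σ = ∅ ∨ Finset.powersetCard 2 S ⊆ σ))) with hC
  have key : (Qnk n k).eval (1 - 2^(k.choose 2 - 1) : ℤ) = 0 ↔ C.card = 0 := by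
    constructor
    · intro h0
      rw [h0, mul_zero] at hmain
      have h2 : ((4 : ℤ))^0 ≠ 0 := by norm_num
      have := hmain.symm
      rcases mul_eq_zero.mp this with h | h
      · rcases mul_eq_zero.mp h with h' | h'
        · exact absurd h' (pow_ne_zero _ (by norm_num))
        · exact absurd h' (pow_ne_zero _ (by norm_num))
      · exact_mod_cast h
    · intro h0
      have : (C.card : ℤ) = 0 := by exact_mod_cast h0
      rw [this, mul_zero] at hmain
      rcases mul_eq_zero.mp hmain with h | h
      · exact absurd h (pow_ne_zero _ (by norm_num))
      · exact h
  rw [key]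
  have key2 : C.card = 0 ↔
      (∀ σ ∈ (Finset.powersetCard 2 (Finset.univ : Finset (Fin n))).powerset,
        ∃ S ∈ ksubsets n k,
          (Finset.powersetCard 2 S ∩ σ = ∅ ∨ Finset.powersetCard 2 S ⊆ σ)) := by
    rw [Finset.card_eq_zero, hC, Finset.filter_eq_empty_iff]
    constructor
    · intro H σ hσ
      have := H hσ
      push_neg at this
      obtain ⟨S, hS, hS2⟩ := this
      exact ⟨S, hS, hS2⟩
    · intro H σ hσ
      obtain ⟨S, hS, hS2⟩ := H σ hσ
      push_neg
      exact ⟨S, hS, hS2⟩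
  rw [key2, bridge n k]
  constructor
  · intro H
    have hn : 0 < n := by omega
    exact Nat.sInf_le ⟨hn, H⟩
  · intro hle
    obtain ⟨n₀, hn₀, H₀⟩ := ramsey_exists (k + k) k k le_rfl
    have hne : {m : ℕ | 0 < m ∧ ∀ G : SimpleGraph (Fin m),
        (∃ s : Finset (Fin m), G.IsNClique k s) ∨
        (∃ s : Finset (Fin m), Gᶜ.IsNClique k s)}.Nonempty := ⟨n₀, hn₀, H₀⟩
    have hmem := Nat.sInf_mem hne
    exact ramseyProp_mono hle hmem.2
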